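/- Fix a real N > 0. For every real x and every real y with y²·(1+x²/N) < N, the series Σ_{n=0}^{∞} (yⁿ/n!)·H_n^N(x) converges, with sum equal to the closed-form generating function [(1−xy/N)² + y²/N]^{−N}, a real power of the positive real (1−xy/N)² + y²/N. -/

import Mathlib

open Complex Metric

/-- Relativistic Hermite polynomial via Rodrigues' formula:
`H_n^N(x) = (-1)^n (1+x²/N)^(N+n) (dⁿ/dtⁿ)((1+t²/N)^(-N)) |_{t=x}` (rpow powers). -/
noncomputable def relHermite (N : ℝ) (n : ℕ) (x : ℝ) : ℝ :=
  (-1) ^ n * (1 + x ^ 2 / N) ^ (N + (n : ℝ)) *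
    iteratedDeriv n (fun t : ℝ => (1 + t ^ 2 / N) ^ (-N)) x

lemma relH_slit (N : ℝ) (hN : 0 < N) {z : ℂ} (hz : z.re = 0 → z.im ^ 2 < N) :
    1 + z ^ 2 / (N : ℂ) ∈ Complex.slitPlane := by
  have hre : (1 + z ^ 2 / (N : ℂ)).re = 1 + (z.re * z.re - z.im * z.im) / N := by
    simp [pow_two, Complex.div_ofReal_re, Complex.mul_re]
  have him : (1 + z ^ 2 / (N : ℂ)).im = (z.re * z.im + z.im * z.re) / N := by
    simp [pow_two, Complex.div_ofReal_im, Complex.mul_im]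
  rw [Complex.mem_slitPlane_iff]
  by_cases hb : z.im = 0
  · left; rw [hre, hb]
    have h1 : 0 ≤ z.re * z.re / N := div_nonneg (mul_self_nonneg _) hN.le
    have h2 : (z.re * z.re - 0 * 0) / N = z.re * z.re / N := by ring
    rw [h2]; linarith
  · by_cases ha : z.re = 0
    · left; rw [hre, ha]
      have hb2 := hz ha
      rw [pow_two] at hb2
      have h3 : z.im * z.im / N < 1 := (div_lt_one hN).2 hb2
      have h4 : (0 * 0 - z.im * z.im) / N = -(z.im * z.im / N) := by ring
      rw [h4]; linarith
    · right; rw [him]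
      intro h
      rcases mul_eq_zero.1 (by field_simp at h; linarith [h] : z.re * z.im = 0) with h' | h'
      · exact ha h'
      · exact hb h'

lemma relH_ofReal (N : ℝ) (hN : 0 < N) (t : ℝ) :
    (((1 + t ^ 2 / N) ^ (-N) : ℝ) : ℂ) = (1 + (t : ℂ) ^ 2 / (N : ℂ)) ^ (-(N : ℂ)) := by
  have h0 : (0 : ℝ) ≤ 1 + t ^ 2 / N := by positivity
  rw [Complex.ofReal_cpow h0]
  push_cast
  ring_nf

lemma relH_bridge (N : ℝ) (hN : 0 < N) (n : ℕ) (t : ℝ) :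
    iteratedDeriv n (fun u : ℝ => (1 + (u : ℂ) ^ 2 / (N : ℂ)) ^ (-(N : ℂ))) t
      = iteratedDeriv n (fun z : ℂ => (1 + z ^ 2 / (N : ℂ)) ^ (-(N : ℂ))) (t : ℂ) := by
  set F : ℂ → ℂ := fun z => (1 + z ^ 2 / (N : ℂ)) ^ (-(N : ℂ)) with hF
  set U : Set ℂ := {z : ℂ | 1 + z ^ 2 / (N : ℂ) ∈ Complex.slitPlane} with hU
  have hUopen : IsOpen U :=
    Complex.isOpen_slitPlane.preimage (by fun_prop)
  have hUreal : ∀ s : ℝ, (s : ℂ) ∈ U := by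
    intro s
    refine relH_slit N hN ?_
    intro h
    simp
    exact hN
  have hFdiff : DifferentiableOn ℂ F U := by
    intro z hz
    exact (((differentiableAt_const _).add
      (by fun_prop : DifferentiableAt ℂ (fun z : ℂ => z ^ 2 / (N : ℂ)) z)).cpow
      (differentiableAt_const _) hz).differentiableWithinAt
  have hFan : AnalyticOnNhd ℂ F U := hFdiff.analyticOnNhd hUopen
  have hIter : ∀ m : ℕ, AnalyticOnNhd ℂ (iteratedDeriv m F) U := by
    intro m
    induction m with
    | zero => simpa [iteratedDeriv_zero] using hFan
    | succ m ih => rw [iteratedDeriv_succ]; exact ih.deriv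
  induction n generalizing t with
  | zero => simp [iteratedDeriv_zero]; rfl
  | succ n ih =>
    rw [iteratedDeriv_succ, iteratedDeriv_succ]
    have h1 : HasDerivAt (iteratedDeriv n F)
        (deriv (iteratedDeriv n F) (t : ℂ)) (t : ℂ) :=
      ((hIter n _ (hUreal t)).differentiableAt).hasDerivAt
    have h2 := h1.comp_ofReal
    have h3 : iteratedDeriv n (fun u : ℝ => F (u : ℂ))
        = fun u : ℝ => iteratedDeriv n F (u : ℂ) := funext fun u => ih u
    rw [show (fun u : ℝ => (1 + (u : ℂ) ^ 2 / (N : ℂ)) ^ (-(N : ℂ)))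
        = fun u : ℝ => F (u : ℂ) from rfl, h3]
    exact h2.deriv

lemma relH_bridge2 (N : ℝ) (hN : 0 < N) (n : ℕ) (t : ℝ) :
    iteratedDeriv n (fun u : ℝ => (((1 + u ^ 2 / N) ^ (-N) : ℝ) : ℂ)) t
      = ((iteratedDeriv n (fun u : ℝ => (1 + u ^ 2 / N) ^ (-N)) t : ℝ) : ℂ) := by
  have hf : ContDiff ℝ (⊤ : ℕ∞) (fun u : ℝ => (1 + u ^ 2 / N) ^ (-N)) := by
    apply ContDiff.rpow_const_of_ne
    · exact contDiff_const.add ((contDiff_id.pow 2).div_const N)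
    · intro u
      positivity
  have := Complex.ofRealCLM.iteratedFDeriv_comp_left hf.contDiffAt (x := t) (i := n) (by exact_mod_cast le_top)
  rw [iteratedDeriv_eq_iteratedFDeriv,
    show (fun u : ℝ => (((1 + u ^ 2 / N) ^ (-N) : ℝ) : ℂ))
      = ⇑Complex.ofRealCLM ∘ (fun u : ℝ => (1 + u ^ 2 / N) ^ (-N)) from rfl,
    this, ContinuousLinearMap.compContinuousMultilinearMap_coe, Function.comp_apply,
    ← iteratedDeriv_eq_iteratedFDeriv, Complex.ofRealCLM_apply]

theorem relHermite_genFun (N : ℝ) (hN : 0 < N) (x y : ℝ)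
    (hy : y ^ 2 * (1 + x ^ 2 / N) < N) :
    HasSum (fun n : ℕ => y ^ n / (Nat.factorial n : ℝ) * relHermite N n x)
      (((1 - x * y / N) ^ 2 + y ^ 2 / N) ^ (-N)) := by
  set a : ℝ := 1 + x ^ 2 / N with ha_def
  have ha : 0 < a := by positivity
  set f : ℝ → ℝ := fun t : ℝ => (1 + t ^ 2 / N) ^ (-N) with hf_def
  set F : ℂ → ℂ := fun z => (1 + z ^ 2 / (N : ℂ)) ^ (-(N : ℂ)) with hF_def
  set w : ℝ := -(y * a) with hw_def
  set s : ℝ := Real.sqrt (N + x ^ 2) with hs_def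
  have hs2 : s ^ 2 = N + x ^ 2 := Real.sq_sqrt (by positivity)
  have hs0 : 0 < s := Real.sqrt_pos.2 (by positivity)
  have hws : |w| < s := by
    have h1 : w ^ 2 < s ^ 2 := by
      rw [hs2]
      have hNa : N + x ^ 2 = N * a := by rw [ha_def]; field_simp
      have hw2 : w ^ 2 = (y ^ 2 * a) * a := by rw [hw_def]; ring
      rw [hNa, hw2]
      exact mul_lt_mul_of_pos_right hy ha
    nlinarith [abs_nonneg w, _root_.sq_abs w]
  set r : ℝ := (|w| + s) / 2 with hr_def
  have hr0 : 0 < r := by positivity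
  have hrs : r < s := by rw [hr_def]; linarith
  have hwr : |w| < r := by rw [hr_def]; linarith
  -- differentiability on the closed ball
  have hFdiff : DifferentiableOn ℂ F (closedBall (x : ℂ) r) := by
    intro z hz
    have hzs : dist z (x : ℂ) < s := lt_of_le_of_lt (mem_closedBall.1 hz) hrs
    have hslit : 1 + z ^ 2 / (N : ℂ) ∈ Complex.slitPlane := by
      refine relH_slit N hN ?_
      intro hre0
      have hd : dist z (x : ℂ) ^ 2 = (z.re - x) ^ 2 + z.im ^ 2 := by
        rw [Complex.dist_eq, Complex.sq_norm, Complex.normSq_apply]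
        simp [Complex.sub_re, Complex.sub_im]
        ring_nf
      have h2 : (z.re - x) ^ 2 + z.im ^ 2 < N + x ^ 2 := by
        rw [← hd, ← hs2]
        have := dist_nonneg (x := z) (y := (x : ℂ))
        nlinarith
      rw [hre0] at h2
      nlinarith
    exact (((differentiableAt_const _).add
      (by fun_prop : DifferentiableAt ℂ (fun z : ℂ => z ^ 2 / (N : ℂ)) z)).cpow
      (differentiableAt_const _) hslit).differentiableWithinAt
  set R : NNReal := ⟨r, hr0.le⟩ with hR_def
  have hRball : DifferentiableOn ℂ F (closedBall (x : ℂ) R) := hFdiff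
  have hps := hRball.hasFPowerSeriesOnBall (by exact_mod_cast hr0)
  have hmem : ((w : ℂ)) ∈ Metric.eball (0 : ℂ) (R : ENNReal) := by
    rw [mem_eball_zero_iff, enorm_eq_nnnorm]
    rw [show ((R : ENNReal)) = ((R : NNReal) : ENNReal) from rfl, ENNReal.coe_lt_coe,
      ← NNReal.coe_lt_coe]
    simp; exact hwr
  have hsum := hps.hasSum_iteratedFDeriv hmem
  -- identify complex iterated derivatives with real ones
  have hbridge : ∀ n : ℕ, iteratedDeriv n F (x : ℂ) = ((iteratedDeriv n f x : ℝ) : ℂ) := by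
    intro n
    rw [← relH_bridge N hN n x]
    have : (fun u : ℝ => (1 + (u : ℂ) ^ 2 / (N : ℂ)) ^ (-(N : ℂ)))
        = fun u : ℝ => ((f u : ℝ) : ℂ) := by
      funext u
      rw [hf_def, relH_ofReal N hN u]
    rw [this, hf_def]
    exact relH_bridge2 N hN n x
  have hterm : ∀ n : ℕ, ((Nat.factorial n : ℂ))⁻¹ • iteratedFDeriv ℂ n F (x : ℂ)
      (fun _ => (w : ℂ)) = (((w ^ n / (Nat.factorial n : ℝ) * iteratedDeriv n f x : ℝ)) : ℂ) := by
    intro n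
    rw [iteratedFDeriv_apply_eq_iteratedDeriv_mul_prod, hbridge n]
    simp only [Finset.prod_const, Finset.card_univ, Fintype.card_fin, smul_eq_mul]
    push_cast
    ring
  have hval : F ((x : ℂ) + (w : ℂ)) = ((f (x + w) : ℝ) : ℂ) := by
    rw [show ((x : ℂ) + (w : ℂ)) = (((x + w : ℝ)) : ℂ) by push_cast; ring,
      hf_def, relH_ofReal N hN (x + w)]
  rw [funext hterm, hval] at hsum
  have hgsum : HasSum (fun n : ℕ => w ^ n / (Nat.factorial n : ℝ) * iteratedDeriv n f x)
      (f (x + w)) := Complex.hasSum_ofReal.1 hsum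
  -- final algebraic identification
  set c : ℝ := (1 - x * y / N) ^ 2 + y ^ 2 / N with hc_def
  have hbc : 1 + (x + w) ^ 2 / N = a * c := by
    rw [hw_def, ha_def, hc_def]
    field_simp
    ring
  have hac : 0 < a * c := by rw [← hbc]; positivity
  have hc : 0 < c := by nlinarith
  have hfval : a ^ N * f (x + w) = c ^ (-N) := by
    rw [hf_def]
    simp only
    rw [hbc, Real.mul_rpow ha.le hc.le, ← mul_assoc, ← Real.rpow_add ha,
      add_neg_cancel, Real.rpow_zero, one_mul]
  have hfun : ∀ n : ℕ, y ^ n / (Nat.factorial n : ℝ) * relHermite N n x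
      = a ^ N * (w ^ n / (Nat.factorial n : ℝ) * iteratedDeriv n f x) := by
    intro n
    have hA : (1 + x ^ 2 / N) ^ (N + (n : ℝ)) = a ^ N * a ^ n := by
      rw [← ha_def, Real.rpow_add ha, Real.rpow_natCast]
    have hwn : w ^ n = (-1) ^ n * (y ^ n * a ^ n) := by
      rw [hw_def, neg_pow, mul_pow]
    rw [relHermite, hA, hwn]
    ring
  have final := hgsum.mul_left (a ^ N)
  rw [hfval] at final
  rw [funext hfun]
  exact final
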